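/- For γ ∈ [0, π/10] and K ≥ 1/cos(2π/5), the function Ψ'(γ) = (sin γ − K·sin(2π/5))/sin(2π/5 − γ) is monotonically non-increasing on [0, π/10]. -/

import Mathlib

open Real

theorem psi_antitone (K : ℝ) (hK : 1 / Real.cos (2 * π / 5) ≤ K) :
    AntitoneOn (fun γ : ℝ => (Real.sin γ - K * Real.sin (2 * π / 5)) / Real.sin (2 * π / 5 - γ))
      (Set.Icc 0 (π / 10)) := by
  have hπ := Real.pi_pos
  set a : ℝ := 2 * π / 5 with ha
  have hcosa : 0 < Real.cos a := by
    apply Real.cos_pos_of_mem_Ioo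
    constructor <;> nlinarith
  have hsinpos : ∀ x ∈ Set.Icc (0:ℝ) (π/10), 0 < Real.sin (a - x) := by
    intro x hx
    simp only [Set.mem_Icc] at hx
    apply Real.sin_pos_of_pos_of_lt_pi <;> nlinarith [hx.1, hx.2]
  have hderiv : ∀ x ∈ Set.Icc (0:ℝ) (π/10),
      HasDerivAt (fun γ : ℝ => (Real.sin γ - K * Real.sin a) / Real.sin (a - γ))
        ((Real.sin a - K * Real.sin a * Real.cos (a - x)) / (Real.sin (a - x))^2) x := by
    intro x hx
    have h1 : HasDerivAt (fun γ : ℝ => Real.sin γ - K * Real.sin a) (Real.cos x) x :=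
      (Real.hasDerivAt_sin x).sub_const _
    have h2 : HasDerivAt (fun γ : ℝ => Real.sin (a - γ)) (Real.cos (a - x) * (0 - 1)) x :=
      (Real.hasDerivAt_sin (a - x)).comp x ((hasDerivAt_const x a).sub (hasDerivAt_id x))
    have h3 := h1.div h2 (ne_of_gt (hsinpos x hx))
    refine h3.congr_deriv ?_
    have key : Real.sin a = Real.sin (a - x) * Real.cos x + Real.cos (a - x) * Real.sin x := by
      rw [← Real.sin_add]; ring_nf
    rw [key]; field_simp; ring
  apply antitoneOn_of_deriv_nonpos (convex_Icc _ _)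
  · exact fun x hx => (hderiv x hx).continuousAt.continuousWithinAt
  · intro x hx
    rw [interior_Icc] at hx
    exact (hderiv x (Set.mem_Icc_of_Ioo hx)).differentiableAt.differentiableWithinAt
  · intro x hx
    rw [interior_Icc] at hx
    have hx' := Set.mem_Icc_of_Ioo hx
    rw [(hderiv x hx').deriv]
    simp only [Set.mem_Icc] at hx'
    have hsina : 0 < Real.sin a := by
      apply Real.sin_pos_of_pos_of_lt_pi <;> nlinarith
    have hcosge : Real.cos a ≤ Real.cos (a - x) := by
      apply Real.cos_le_cos_of_nonneg_of_le_pi <;> nlinarith [hx'.1, hx'.2]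
    have hKpos : (0:ℝ) < K := lt_of_lt_of_le (by positivity) hK
    have h1 : 1 ≤ K * Real.cos a := by
      rw [div_le_iff₀ hcosa] at hK; linarith
    have h2 : 1 ≤ K * Real.cos (a - x) := by nlinarith
    apply div_nonpos_of_nonpos_of_nonneg
    · nlinarith
    · positivity
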